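/- Let A be a complex unital Banach algebra, let a ∈ A and let p ∈ A be idempotent with R_r(p) = R_r(a). Let c ∈ A be such that R_r(c) is a closed subset of A, and suppose there exists a real number t ≥ 0 with t·(1 + ‖p‖) < 1 such that dist(x, R_r(a)) ≤ t·‖x‖ for every x ∈ R_r(c) and dist(y, R_r(c)) ≤ t·‖y‖ for every y ∈ R_r(a) (i.e., the gap δ̂(R_r(c), R_r(a)) < 1/(1 + ‖p‖)). Then every element of A can be written as a sum of an element of R_r(c) and an element of K_r(p), and R_r(c) ∩ K_r(p) = {0}. -/

import Mathlib

/-- Right range `R_r(a) = {a·x : x ∈ A}`. -/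
def Rr {A : Type*} [Ring A] (a : A) : Set A := {y | ∃ x, y = a * x}

/-- Right kernel `K_r(a) = {x ∈ A : a·x = 0}`. -/
def Kr {A : Type*} [Ring A] (a : A) : Set A := {x | a * x = 0}

/-- Left range `R_l(a) = {x·a : x ∈ A}`. -/
def Rl {A : Type*} [Ring A] (a : A) : Set A := {y | ∃ x, y = x * a}

/-- Left kernel `K_l(a) = {x ∈ A : x·a = 0}`. -/
def Kl {A : Type*} [Ring A] (a : A) : Set A := {x | x * a = 0}
theorem stmt12 {A : Type*} [NormedRing A] [NormedAlgebra ℂ A] [CompleteSpace A]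
    (a p c : A) (hp : p * p = p) (hpa : Rr p = Rr a)
    (hclosed : IsClosed (Rr c))
    (hgap : ∃ t : ℝ, 0 ≤ t ∧ t * (1 + ‖p‖) < 1 ∧
      (∀ x ∈ Rr c, Metric.infDist x (Rr a) ≤ t * ‖x‖) ∧
      (∀ y ∈ Rr a, Metric.infDist y (Rr c) ≤ t * ‖y‖)) :
    (∀ z : A, ∃ u ∈ Rr c, ∃ v ∈ Kr p, z = u + v) ∧ Rr c ∩ Kr p = {0} := by
  obtain ⟨t, ht0, hts, hca, hac⟩ := hgap
  have hp1 : (0:ℝ) < 1 + ‖p‖ := by positivity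
  have h0c : (0:A) ∈ Rr c := ⟨0, by simp⟩
  have h0a : (0:A) ∈ Rr a := ⟨0, by simp⟩
  have haddc : ∀ x ∈ Rr c, ∀ y ∈ Rr c, x + y ∈ Rr c := by
    rintro x ⟨x', rfl⟩ y ⟨y', rfl⟩
    exact ⟨x' + y', by rw [mul_add]⟩
  have hfix : ∀ y ∈ Rr a, p * y = y := by
    intro y hy
    rw [← hpa] at hy
    obtain ⟨x, rfl⟩ := hy
    rw [← mul_assoc, hp]
  have hmem : ∀ z : A, p * z ∈ Rr a := fun z => hpa ▸ ⟨z, rfl⟩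
  -- key inequality : for u ∈ Rr c, ‖u - p u‖ ≤ (1+‖p‖) t ‖u‖
  have hkey : ∀ u ∈ Rr c, ‖u - p * u‖ ≤ (1 + ‖p‖) * (t * ‖u‖) := by
    intro u hu
    have hle : ∀ w ∈ Rr a, ‖u - p * u‖ ≤ (1 + ‖p‖) * dist u w := by
      intro w hw
      have h1 : u - p * u = (u - w) - p * (u - w) := by
        rw [mul_sub, hfix w hw]; abel
      rw [h1, dist_eq_norm]
      calc ‖(u - w) - p * (u - w)‖ ≤ ‖u - w‖ + ‖p * (u - w)‖ := norm_sub_le _ _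
        _ ≤ ‖u - w‖ + ‖p‖ * ‖u - w‖ := by linarith [norm_mul_le p (u - w)]
        _ = (1 + ‖p‖) * ‖u - w‖ := by ring
    have h2 : ‖u - p * u‖ ≤ (1 + ‖p‖) * Metric.infDist u (Rr a) := by
      by_contra h
      push_neg at h
      have h3 : Metric.infDist u (Rr a) < ‖u - p * u‖ / (1 + ‖p‖) := by
        rw [lt_div_iff₀ hp1]; linarith [h]
      obtain ⟨w, hw, hdw⟩ := (Metric.infDist_lt_iff ⟨0, h0a⟩).mp h3
      have h4 := hle w hw
      have h5 : (1 + ‖p‖) * dist u w < (1 + ‖p‖) * (‖u - p * u‖ / (1 + ‖p‖)) :=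
        mul_lt_mul_of_pos_left hdw hp1
      rw [mul_div_cancel₀ _ (ne_of_gt hp1)] at h5
      linarith
    calc ‖u - p * u‖ ≤ (1 + ‖p‖) * Metric.infDist u (Rr a) := h2
      _ ≤ (1 + ‖p‖) * (t * ‖u‖) := by
          have := hca u hu
          nlinarith [Metric.infDist_nonneg (x := u) (s := Rr a)]
  -- set up t' and q
  set t' : ℝ := (t + 1 / (1 + ‖p‖)) / 2 with ht'def
  have htlt : t < 1 / (1 + ‖p‖) := by
    rw [lt_div_iff₀ hp1]; linarith
  have htt' : t < t' := by rw [ht'def]; linarith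
  have ht'0 : 0 ≤ t' := le_of_lt (lt_of_le_of_lt ht0 htt')
  have ht's : t' * (1 + ‖p‖) < 1 := by
    have : t' < 1 / (1 + ‖p‖) := by rw [ht'def]; linarith
    calc t' * (1 + ‖p‖) < (1 / (1 + ‖p‖)) * (1 + ‖p‖) := by
          exact mul_lt_mul_of_pos_right this hp1
      _ = 1 := by field_simp
  set q : ℝ := ‖p‖ * t' with hqdef
  have hq0 : 0 ≤ q := mul_nonneg (norm_nonneg p) ht'0
  have hq1 : q < 1 := by
    have : ‖p‖ * t' ≤ (1 + ‖p‖) * t' := by nlinarith [norm_nonneg p]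
    calc q ≤ (1 + ‖p‖) * t' := this
      _ < 1 := by linarith [ht's]
  -- choice of approximants
  have hchoose : ∀ y ∈ Rr a, ∃ u ∈ Rr c, ‖y - u‖ ≤ t' * ‖y‖ := by
    intro y hy
    by_cases hy0 : y = 0
    · exact ⟨0, h0c, by simp [hy0]⟩
    · have hny : 0 < ‖y‖ := norm_pos_iff.mpr hy0
      have h1 : Metric.infDist y (Rr c) < t' * ‖y‖ := by
        calc Metric.infDist y (Rr c) ≤ t * ‖y‖ := hac y hy
          _ < t' * ‖y‖ := by exact mul_lt_mul_of_pos_right htt' hny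
      obtain ⟨u, hu, hdu⟩ := (Metric.infDist_lt_iff ⟨0, h0c⟩).mp h1
      exact ⟨u, hu, by rw [← dist_eq_norm]; exact le_of_lt hdu⟩
  -- surjectivity of u ↦ p u from Rr c onto Rr a
  have hsurj : ∀ y ∈ Rr a, ∃ u ∈ Rr c, p * u = y := by
    intro y hy
    classical
    -- choice function
    let uu : A → A := fun w => if h : w ∈ Rr a then (hchoose w h).choose else 0
    have huu : ∀ w ∈ Rr a, uu w ∈ Rr c ∧ ‖w - uu w‖ ≤ t' * ‖w‖ := by
      intro w hw
      have := (hchoose w hw).choose_spec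
      simpa [uu, dif_pos hw] using this
    -- iteration
    let Y : ℕ → A := fun n => Nat.rec y (fun _ w => w - p * uu w) n
    have hY0 : Y 0 = y := rfl
    have hYs : ∀ n, Y (n + 1) = Y n - p * uu (Y n) := fun n => rfl
    have hYa : ∀ n, Y n ∈ Rr a ∧ ‖Y n‖ ≤ q ^ n * ‖y‖ := by
      intro n
      induction n with
      | zero => exact ⟨hy, by rw [hY0]; simp⟩
      | succ n ih =>
        obtain ⟨hmemn, hnorm⟩ := ih
        have heq : Y (n + 1) = p * (Y n - uu (Y n)) := by
          rw [hYs n, mul_sub, hfix (Y n) hmemn]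
        constructor
        · rw [heq]; exact hmem _
        · rw [heq]
          calc ‖p * (Y n - uu (Y n))‖ ≤ ‖p‖ * ‖Y n - uu (Y n)‖ := norm_mul_le _ _
            _ ≤ ‖p‖ * (t' * ‖Y n‖) := by
                have := (huu (Y n) hmemn).2
                nlinarith [norm_nonneg p]
            _ = q * ‖Y n‖ := by ring
            _ ≤ q * (q ^ n * ‖y‖) := by nlinarith
            _ = q ^ (n + 1) * ‖y‖ := by ring
    have hubound : ∀ n, ‖uu (Y n)‖ ≤ (1 + t') * ‖y‖ * q ^ n := by
      intro n
      obtain ⟨hmemn, hnorm⟩ := hYa n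
      have h1 := (huu (Y n) hmemn).2
      calc ‖uu (Y n)‖ = ‖Y n - (Y n - uu (Y n))‖ := by rw [sub_sub_cancel]
        _ ≤ ‖Y n‖ + ‖Y n - uu (Y n)‖ := norm_sub_le _ _
        _ ≤ ‖Y n‖ + t' * ‖Y n‖ := by linarith
        _ = (1 + t') * ‖Y n‖ := by ring
        _ ≤ (1 + t') * (q ^ n * ‖y‖) := by nlinarith
        _ = (1 + t') * ‖y‖ * q ^ n := by ring
    have hsummable : Summable (fun n => uu (Y n)) := by
      apply Summable.of_norm_bounded (g := fun n => (1 + t') * ‖y‖ * q ^ n)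
      · exact (summable_geometric_of_lt_one hq0 hq1).mul_left _
      · exact hubound
    set u : A := ∑' n, uu (Y n) with hudef
    have htend : Filter.Tendsto (fun n => ∑ i ∈ Finset.range n, uu (Y i))
        Filter.atTop (nhds u) := hsummable.hasSum.tendsto_sum_nat
    have hSmem : ∀ n, (∑ i ∈ Finset.range n, uu (Y i)) ∈ Rr c := by
      intro n
      induction n with
      | zero => simpa using h0c
      | succ n ih =>
        rw [Finset.sum_range_succ]
        exact haddc _ ih _ (huu (Y n) (hYa n).1).1
    have humem : u ∈ Rr c := hclosed.mem_of_tendsto htend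
      (Filter.Eventually.of_forall hSmem)
    have hpS : ∀ n, p * (∑ i ∈ Finset.range n, uu (Y i)) = y - Y n := by
      intro n
      induction n with
      | zero => simp [hY0]
      | succ n ih =>
        rw [Finset.sum_range_succ, mul_add, ih, hYs n]
        abel
    have hYtend : Filter.Tendsto Y Filter.atTop (nhds 0) := by
      apply squeeze_zero_norm (fun n => (hYa n).2)
      have : Filter.Tendsto (fun n : ℕ => q ^ n) Filter.atTop (nhds 0) :=
        tendsto_pow_atTop_nhds_zero_of_lt_one hq0 hq1
      simpa using this.mul_const ‖y‖
    have hpu : p * u = y := by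
      have h1 : Filter.Tendsto (fun n => p * (∑ i ∈ Finset.range n, uu (Y i)))
          Filter.atTop (nhds (p * u)) :=
        ((continuous_mul_left p).continuousAt.tendsto).comp htend
      have h2 : Filter.Tendsto (fun n => y - Y n) Filter.atTop (nhds (y - 0)) :=
        tendsto_const_nhds.sub hYtend
      have h3 : Filter.Tendsto (fun n => p * (∑ i ∈ Finset.range n, uu (Y i)))
          Filter.atTop (nhds (y - 0)) := by
        refine h2.congr ?_
        intro n; exact (hpS n).symm
      have := tendsto_nhds_unique h1 h3
      simpa using this
    exact ⟨u, humem, hpu⟩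
  constructor
  · intro z
    obtain ⟨u, huc, hpu⟩ := hsurj (p * z) (hmem z)
    refine ⟨u, huc, z - u, ?_, by abel⟩
    show p * (z - u) = 0
    rw [mul_sub, hpu, sub_self]
  · ext x
    simp only [Set.mem_inter_iff, Set.mem_singleton_iff]
    constructor
    · rintro ⟨hxc, hxk⟩
      have hpx : p * x = 0 := hxk
      have h1 := hkey x hxc
      rw [hpx, sub_zero] at h1
      have := hts
      have hx0 : ‖x‖ ≤ 0 := by nlinarith [norm_nonneg x]
      exact norm_le_zero_iff.mp hx0
    · rintro rfl
      exact ⟨h0c, by simp [Kr]⟩
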